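/- The following are equivalent: (1) the dominating number 𝔡 equals ℵ₁, i.e., there is a family of ℵ₁ functions in ω^ω such that every function in ω^ω is eventually dominated by one of them; (2) there is a sequence d : ω₁ → ω^ω increasing in the eventual domination order such that for every f ∈ ω^ω the set S_f = {α ∈ ω₁ : f(n) ≤ d(α)(n) for all n} is stationary in ω₁. -/

import Mathlib

noncomputable section

open Filter

universe u

/-- The first uncountable ordinal. -/
def omega1 : Ordinal := (Cardinal.aleph 1).ord

/-- `C` is closed and unbounded below `ω₁`. -/
def IsClubBelowOmega1 (C : Set Ordinal) : Prop :=
  (∀ a < omega1, ∃ b ∈ C, a ≤ b ∧ b < omega1) ∧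
  (∀ a < omega1, a ≠ 0 → (∀ b < a, ∃ c ∈ C, b < c ∧ c < a) → a ∈ C)

/-- `S` is stationary in `ω₁`: it meets every club. -/
def IsStationaryInOmega1 (S : Set Ordinal) : Prop :=
  ∀ C, IsClubBelowOmega1 C → (S ∩ C).Nonempty

lemma omega1_isLimit : Order.IsSuccLimit omega1.{u} :=
  Cardinal.isSuccLimit_ord (Cardinal.aleph0_le_aleph 1)

lemma omega1_pos : 0 < omega1.{u} := omega1_isLimit.pos

lemma succ_lt_omega1 {a : Ordinal.{u}} (h : a < omega1) : a + 1 < omega1 := by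
  simpa [Ordinal.add_one_eq_succ, -Order.succ_eq_add_one] using omega1_isLimit.succ_lt h

lemma card_lt_of_lt_omega1 {a : Ordinal.{u}} (h : a < omega1) : a.card < Cardinal.aleph 1 :=
  Cardinal.lt_ord.1 h

lemma lift_aleph_one : Cardinal.lift.{u + 1, u} (Cardinal.aleph 1) = Cardinal.aleph 1 := by
  rw [Cardinal.lift_aleph, Ordinal.lift_one]

lemma mk_Iio_omega1 : Cardinal.mk (Set.Iio omega1.{u}) = Cardinal.aleph 1 := by
  rw [Ordinal.mk_Iio_ordinal, omega1, Cardinal.card_ord, lift_aleph_one]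

lemma countable_Iio_of_lt_omega1 {a : Ordinal.{u}} (h : a < omega1) : (Set.Iio a).Countable := by
  rw [Cardinal.countable_iff_lt_aleph_one, Ordinal.mk_Iio_ordinal, ← lift_aleph_one]
  exact Cardinal.lift_lt.2 (card_lt_of_lt_omega1 h)

lemma not_countable_Iio_omega1 : ¬ (Set.Iio omega1.{u}).Countable := by
  rw [Cardinal.countable_iff_lt_aleph_one, mk_Iio_omega1]
  simp

lemma cof_omega1 : (omega1.{u}).cof = Cardinal.aleph 1 :=
  Cardinal.isRegular_aleph_one.cof_eq

lemma countable_sup_lt_omega1 {x : ℕ → Ordinal.{u}} (h : ∀ k, x k < omega1) :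
    (⨆ k, x k) < omega1 := by
  apply Ordinal.iSup_lt_ord_lift _ h
  rw [cof_omega1]
  simp [Cardinal.aleph0_lt_aleph_one]

lemma exists_mem_club_gt {C : Set Ordinal.{u}} (hC : IsClubBelowOmega1 C) {a : Ordinal}
    (ha : a < omega1) : ∃ b ∈ C, a < b ∧ b < omega1 := by
  obtain ⟨b, hb, hab, hb'⟩ := hC.1 (a + 1) (succ_lt_omega1 ha)
  exact ⟨b, hb, lt_of_lt_of_le (by simpa [Ordinal.add_one_eq_succ, -Order.succ_eq_add_one] using Order.lt_succ a) hab, hb'⟩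

lemma club_iInter {C : ℕ → Set Ordinal.{u}} (h : ∀ i, IsClubBelowOmega1 (C i)) :
    IsClubBelowOmega1 (⋂ i, C i) := by
  constructor
  · -- unbounded
    intro a ha
    -- choice function: next element of C i above any p < ω₁
    choose g hg1 hg2 hg3 using fun (i : ℕ) (p : {o : Ordinal.{u} // o < omega1}) =>
      exists_mem_club_gt (h i) p.2
    -- build the diagonal sequence
    let x : ℕ → {o : Ordinal.{u} // o < omega1} := fun k =>
      Nat.rec ⟨a, ha⟩ (fun k p => ⟨g (Nat.unpair k).1 p, hg3 _ p⟩) k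
    have hx_succ : ∀ k, (x k).1 < (x (k + 1)).1 := fun k => hg2 _ _
    have hx_mem : ∀ k, (x (k + 1)).1 ∈ C (Nat.unpair k).1 := fun k => hg1 _ _
    have hx_mono : ∀ {k l}, k ≤ l → (x k).1 ≤ (x l).1 := by
      intro k l hkl
      exact monotone_nat_of_le_succ (fun k => (hx_succ k).le) hkl
    set b : Ordinal := ⨆ k, (x k).1 with hb
    have hblt : b < omega1 := countable_sup_lt_omega1 (fun k => (x k).2)
    have hle : ∀ k, (x k).1 ≤ b := fun k => Ordinal.le_iSup (fun k => (x k).1) k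
    have hxlt : ∀ k, (x k).1 < b := fun k => lt_of_lt_of_le (hx_succ k) (hle (k + 1))
    have hbne : b ≠ 0 := by
      intro h0
      exact absurd (hxlt 0) (by simp [h0])
    have hbmem : ∀ i, b ∈ C i := by
      intro i
      apply (h i).2 b hblt hbne
      intro y hy
      obtain ⟨k, hk⟩ := Ordinal.lt_iSup_iff.1 hy
      refine ⟨(x (Nat.pair i k + 1)).1, ?_, ?_, ?_⟩
      · have := hx_mem (Nat.pair i k)
        rwa [Nat.unpair_pair] at this
      · exact lt_of_lt_of_le hk (hx_mono (le_trans (Nat.right_le_pair i k) (Nat.le_succ _)))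
      · exact hxlt (Nat.pair i k + 1)
    refine ⟨b, Set.mem_iInter.2 hbmem, ?_, hblt⟩
    exact le_trans (hx_succ 0).le (hle 1)
  · -- closed
    intro a ha hne hacc
    refine Set.mem_iInter.2 fun i => (h i).2 a ha hne ?_
    intro y hy
    obtain ⟨c, hc, hyc, hca⟩ := hacc y hy
    exact ⟨c, Set.mem_iInter.1 hc i, hyc, hca⟩

lemma club_inter {C D : Set Ordinal.{u}} (hC : IsClubBelowOmega1 C) (hD : IsClubBelowOmega1 D) :
    IsClubBelowOmega1 (C ∩ D) := by
  have := club_iInter (C := fun i => if i = 0 then C else D)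
    (fun i => by split <;> assumption)
  have heq : (⋂ i : ℕ, if i = 0 then C else D) = C ∩ D := by
    ext z
    simp only [Set.mem_iInter, Set.mem_inter_iff]
    constructor
    · intro hz
      exact ⟨by simpa using hz 0, by simpa using hz 1⟩
    · rintro ⟨h1, h2⟩ i
      split <;> assumption
  rwa [heq] at this

lemma club_Iio : IsClubBelowOmega1 (Set.Iio omega1.{u}) := by
  constructor
  · exact fun a ha => ⟨a, ha, le_refl a, ha⟩
  · exact fun a ha _ _ => ha

lemma club_Ioi {ξ : Ordinal.{u}} (hξ : ξ < omega1) :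
    IsClubBelowOmega1 {a | ξ < a ∧ a < omega1} := by
  constructor
  · intro a ha
    refine ⟨max a (ξ + 1), ⟨?_, ?_⟩, le_max_left _ _, ?_⟩
    · exact lt_of_lt_of_le (by simpa [Ordinal.add_one_eq_succ, -Order.succ_eq_add_one] using Order.lt_succ ξ)
        (le_max_right _ _)
    · exact max_lt ha (succ_lt_omega1 hξ)
    · exact max_lt ha (succ_lt_omega1 hξ)
  · intro a ha hne hacc
    obtain ⟨c, hc, _, hca⟩ := hacc 0 (pos_iff_ne_zero.2 hne)
    exact ⟨lt_trans hc.1 hca, ha⟩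

lemma club_nonempty {C : Set Ordinal.{u}} (hC : IsClubBelowOmega1 C) : C.Nonempty := by
  obtain ⟨b, hb, -, -⟩ := hC.1 0 omega1_pos
  exact ⟨b, hb⟩

lemma stationary_mono {S T : Set Ordinal.{u}} (hST : S ⊆ T) (hS : IsStationaryInOmega1 S) :
    IsStationaryInOmega1 T := fun C hC => (hS C hC).mono (Set.inter_subset_inter_left _ hST)
/-- Any countable set of functions has an eventual upper bound `u` with `n ≤ u n`. -/
lemma exists_dominating (s : Set (ℕ → ℕ)) (hs : s.Countable) :
    ∃ u : ℕ → ℕ, (∀ n, n ≤ u n) ∧ ∀ f ∈ s, ∀ᶠ n in atTop, f n ≤ u n := by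
  rcases s.eq_empty_or_nonempty with rfl | hne
  · exact ⟨id, fun n => le_refl n, by simp⟩
  · obtain ⟨h, rfl⟩ := hs.exists_eq_range hne
    refine ⟨fun n => n + (Finset.range (n + 1)).sup (fun i => h i n), fun n => Nat.le_add_right _ _,
      ?_⟩
    rintro f ⟨i, rfl⟩
    rw [eventually_atTop]
    refine ⟨i, fun n hn => ?_⟩
    calc h i n ≤ (Finset.range (n + 1)).sup (fun j => h j n) :=
          Finset.le_sup (f := fun j => h j n) (Finset.mem_range.2 (Nat.lt_succ_of_le hn))
      _ ≤ n + _ := Nat.le_add_left _ _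

/-- The countable set used at stage `α` of the scale recursion. -/
def stageSet (G : Ordinal.{u} → ℕ → ℕ) (α : Ordinal.{u}) (ih : ∀ β, β < α → ℕ → ℕ) :
    Set (ℕ → ℕ) :=
  ((fun b => if h : b < α then ih b h else fun _ => 0) '' Set.Iio α) ∪ (G '' Set.Iic α)

lemma stageSet_countable {G : Ordinal.{u} → ℕ → ℕ} {α : Ordinal.{u}} (hα : α < omega1)
    (ih : ∀ β, β < α → ℕ → ℕ) : (stageSet G α ih).Countable := by
  apply Set.Countable.union
  · exact (countable_Iio_of_lt_omega1 hα).image _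
  · have : (Set.Iic α).Countable := by
      have : Set.Iic α = Set.Iio (α + 1) := by
        ext z; simp [Ordinal.add_one_eq_succ, Order.lt_succ_iff, -Order.succ_eq_add_one]
      rw [this]
      exact countable_Iio_of_lt_omega1 (succ_lt_omega1 hα)
    exact this.image _

def stageVal (G : Ordinal.{u} → ℕ → ℕ) (α : Ordinal.{u}) (ih : ∀ β, β < α → ℕ → ℕ) : ℕ → ℕ :=
  if hα : α < omega1 then Classical.choose (exists_dominating (stageSet G α ih) (stageSet_countable (G := G) hα ih))
  else id

/-- The `≤*`-increasing scale built from the family enumerated by `G`. -/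
def eScale (G : Ordinal.{u} → ℕ → ℕ) : Ordinal.{u} → ℕ → ℕ :=
  Ordinal.lt_wf.fix (stageVal G)

lemma eScale_eq (G : Ordinal.{u} → ℕ → ℕ) (α : Ordinal.{u}) :
    eScale G α = stageVal G α (fun β _ => eScale G β) :=
  Ordinal.lt_wf.fix_eq (stageVal G) α

lemma eScale_spec {G : Ordinal.{u} → ℕ → ℕ} {α : Ordinal.{u}} (hα : α < omega1) :
    (∀ n, n ≤ eScale G α n) ∧
      (∀ f ∈ stageSet G α (fun β _ => eScale G β), ∀ᶠ n in atTop, f n ≤ eScale G α n) := by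
  rw [eScale_eq, stageVal, dif_pos hα]
  exact Classical.choose_spec (exists_dominating (stageSet G α _) (stageSet_countable (G := G) hα _))

lemma eScale_ge_id {G : Ordinal.{u} → ℕ → ℕ} {α : Ordinal.{u}} (hα : α < omega1) (n : ℕ) :
    n ≤ eScale G α n := (eScale_spec hα).1 n

lemma eScale_mono {G : Ordinal.{u} → ℕ → ℕ} {β α : Ordinal.{u}} (hβ : β < α) (hα : α < omega1) :
    ∀ᶠ n in atTop, eScale G β n ≤ eScale G α n := by
  refine (eScale_spec hα).2 _ (Set.mem_union_left _ ⟨β, hβ, ?_⟩)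
  simp [hβ]

lemma eScale_dominates {G : Ordinal.{u} → ℕ → ℕ} {β α : Ordinal.{u}} (hβ : β ≤ α)
    (hα : α < omega1) : ∀ᶠ n in atTop, G β n ≤ eScale G α n :=
  (eScale_spec hα).2 _ (Set.mem_union_right _ ⟨β, hβ, rfl⟩)
lemma exists_inj_nat {α : Ordinal.{u}} (hα : α < omega1) :
    ∃ H : Ordinal.{u} → ℕ, ∀ ξ, ξ < α → ∀ ξ', ξ' < α → H ξ = H ξ' → ξ = ξ' := by
  have hc : (Set.Iio α).Countable := countable_Iio_of_lt_omega1 hα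
  haveI : Countable (Set.Iio α) := hc.to_subtype
  obtain ⟨f, hf⟩ := exists_injective_nat (Set.Iio α)
  refine ⟨fun ξ => if h : ξ < α then f ⟨ξ, h⟩ else 0, ?_⟩
  intro ξ h ξ' h' heq
  simp only [dif_pos h, dif_pos h'] at heq
  exact congrArg Subtype.val (hf heq)

/-- A fixed family of injections witnessing the countability of each `α < ω₁`. -/
def ulamH : Ordinal.{u} → Ordinal.{u} → ℕ :=
  fun α => if h : α < omega1 then Classical.choose (exists_inj_nat h) else fun _ => 0

lemma ulamH_inj {α : Ordinal.{u}} (hα : α < omega1) {ξ ξ' : Ordinal.{u}} (h : ξ < α)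
    (h' : ξ' < α) (heq : ulamH α ξ = ulamH α ξ') : ξ = ξ' := by
  rw [ulamH, dif_pos hα] at heq
  exact Classical.choose_spec (exists_inj_nat hα) ξ h ξ' h' heq

/-- The Ulam matrix. -/
def ulamA (ξ : Ordinal.{u}) (n : ℕ) : Set Ordinal.{u} :=
  {α | ξ < α ∧ α < omega1 ∧ ulamH α ξ = n}

lemma ulamA_disjoint {ξ ξ' : Ordinal.{u}} {n : ℕ} {α : Ordinal.{u}}
    (h : α ∈ ulamA ξ n) (h' : α ∈ ulamA ξ' n) : ξ = ξ' :=
  ulamH_inj h.2.1 h.1 h'.1 (h.2.2.trans h'.2.2.symm)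

lemma ulamA_stationary {ξ : Ordinal.{u}} (hξ : ξ < omega1) :
    ∃ n : ℕ, IsStationaryInOmega1 (ulamA ξ n) := by
  by_contra hcon
  push_neg at hcon
  have h2 : ∀ n : ℕ, ∃ D : Set Ordinal.{u}, IsClubBelowOmega1 D ∧ ulamA ξ n ∩ D = ∅ := by
    intro n
    have := hcon n
    rw [IsStationaryInOmega1] at this
    push_neg at this
    obtain ⟨D, hD, hD2⟩ := this
    exact ⟨D, hD, hD2⟩
  choose D hD1 hD2 using h2
  obtain ⟨b, hb, hξb, hbω⟩ := (club_iInter hD1).1 (ξ + 1) (succ_lt_omega1 hξ)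
  have hξb' : ξ < b := lt_of_lt_of_le
    (by simpa [Ordinal.add_one_eq_succ, -Order.succ_eq_add_one] using Order.lt_succ ξ) hξb
  have hmem : b ∈ ulamA ξ (ulamH b ξ) := ⟨hξb', hbω, rfl⟩
  have : b ∈ ulamA ξ (ulamH b ξ) ∩ D (ulamH b ξ) := ⟨hmem, Set.mem_iInter.1 hb _⟩
  rw [hD2] at this
  exact this

/-- ω₁ splits into ℵ₁ pairwise disjoint stationary sets, indexed by `↥(Iio ω₁) × ℕ`. -/
lemma exists_ulam_partition : ∃ T : (↥(Set.Iio omega1.{u}) × ℕ) → Set Ordinal.{u},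
    (∀ p, IsStationaryInOmega1 (T p)) ∧
    (∀ p q α, α ∈ T p → α ∈ T q → p = q) ∧
    (∀ p α, α ∈ T p → α < omega1) := by
  classical
  set Nfun : Ordinal.{u} → ℕ := fun ξ =>
    if h : ξ < omega1 then Classical.choose (ulamA_stationary h) else 0 with hNfun
  have hNspec : ∀ ξ : Ordinal.{u}, ξ < omega1 → IsStationaryInOmega1 (ulamA ξ (Nfun ξ)) := by
    intro ξ h
    rw [hNfun]; dsimp only; rw [dif_pos h]
    exact Classical.choose_spec (ulamA_stationary h)
  -- pigeonhole: some fiber of Nfun is uncountable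
  have hfib : ∃ n : ℕ, ¬ ({ξ | ξ < omega1.{u} ∧ Nfun ξ = n}).Countable := by
    by_contra hcon
    push_neg at hcon
    apply not_countable_Iio_omega1.{u}
    have : Set.Iio omega1.{u} ⊆ ⋃ n : ℕ, {ξ | ξ < omega1 ∧ Nfun ξ = n} := by
      intro ξ hξ
      exact Set.mem_iUnion.2 ⟨Nfun ξ, hξ, rfl⟩
    exact (Set.countable_iUnion hcon).mono this
  obtain ⟨nstar, hnstar⟩ := hfib
  set X := {ξ | ξ < omega1.{u} ∧ Nfun ξ = nstar} with hX
  have hcard : Cardinal.aleph 1 ≤ Cardinal.mk X := by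
    rw [Cardinal.countable_iff_lt_aleph_one] at hnstar
    exact le_of_not_gt hnstar
  have hle : Cardinal.mk (↥(Set.Iio omega1.{u}) × ℕ) ≤ Cardinal.mk X := by
    rw [Cardinal.mk_prod, mk_Iio_omega1, Cardinal.mk_nat, Cardinal.lift_uzero,
      Cardinal.lift_aleph0, Cardinal.mul_eq_max (Cardinal.aleph0_le_aleph 1) le_rfl,
      max_eq_left (Cardinal.aleph0_le_aleph 1)]
    exact hcard
  obtain ⟨J⟩ := Cardinal.le_def _ _ |>.1 hle
  refine ⟨fun p => ulamA (J p).val nstar, ?_, ?_, ?_⟩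
  · intro p
    obtain ⟨h1, h2⟩ := (J p).property
    have := hNspec (J p).val h1
    rwa [h2] at this
  · intro p q α hp hq
    exact J.injective (Subtype.ext (ulamA_disjoint hp hq))
  · intro p α hα
    exact hα.2.1
lemma mk_image_le_aleph_one (d : Ordinal.{u} → ℕ → ℕ) :
    Cardinal.mk (d '' Set.Iio omega1) ≤ Cardinal.aleph 1 := by
  have h1 := Cardinal.mk_image_le_lift (f := d) (s := Set.Iio omega1.{u})
  rw [Cardinal.lift_uzero, mk_Iio_omega1] at h1
  have h2 : Cardinal.lift.{u + 1, 0} (Cardinal.aleph 1) = Cardinal.aleph 1 := by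
    rw [Cardinal.lift_aleph, Ordinal.lift_one]
  rw [← h2] at h1
  exact Cardinal.lift_le.1 h1

theorem dominating_number_aleph_one_iff_good_dominating_sequence :
    (∃ F : Set (ℕ → ℕ), Cardinal.mk F = Cardinal.aleph 1 ∧
        ∀ g : ℕ → ℕ, ∃ f ∈ F, ∀ᶠ n in atTop, g n ≤ f n) ↔
      (∃ d : Ordinal → (ℕ → ℕ),
        (∀ α β : Ordinal, α < β → β < omega1 → ∀ᶠ n in atTop, d α n ≤ d β n) ∧
        ∀ f : ℕ → ℕ,
          IsStationaryInOmega1 {α | α < omega1 ∧ ∀ n, f n ≤ d α n}) := by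
  constructor
  · rintro ⟨F, hF, hdom⟩
    classical
    -- enumerate `F` along `ω₁`
    have hequiv : Nonempty (↥F ≃ ↥(Set.Iio omega1)) := by
      rw [← Cardinal.lift_mk_eq', hF, mk_Iio_omega1, Cardinal.lift_uzero, Cardinal.lift_aleph,
        Ordinal.lift_one]
    obtain ⟨e⟩ := hequiv
    set Gfun : Ordinal → ℕ → ℕ := fun β =>
      if h : β < omega1 then ((e.symm ⟨β, h⟩ : ↥F) : ℕ → ℕ) else fun _ => 0 with hGfun
    have hGdom : ∀ g : ℕ → ℕ, ∃ γ, γ < omega1 ∧ ∀ᶠ n in atTop, g n ≤ Gfun γ n := by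
      intro g
      obtain ⟨f, hfF, hfd⟩ := hdom g
      have hlt : (e ⟨f, hfF⟩).val < omega1 := (e ⟨f, hfF⟩).property
      refine ⟨(e ⟨f, hfF⟩).val, hlt, ?_⟩
      have heq : Gfun (e ⟨f, hfF⟩).val = f := by
        rw [hGfun]; dsimp only
        rw [dif_pos hlt]
        have h1 : (⟨(e ⟨f, hfF⟩).val, hlt⟩ : ↥(Set.Iio omega1)) = e ⟨f, hfF⟩ :=
          Subtype.ext rfl
        rw [h1, Equiv.symm_apply_apply]
      rw [heq]; exact hfd
    obtain ⟨T, hTstat, hTdisj, hTlt⟩ := exists_ulam_partition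
    set cFun : Ordinal → Ordinal × ℕ := fun α =>
      if h : ∃ p, α ∈ T p then ((h.choose.1.val, h.choose.2)) else (0, 0) with hcFun
    have hcT : ∀ p α, α ∈ T p → cFun α = (p.1.val, p.2) := by
      intro p α hmem
      have hex : ∃ q, α ∈ T q := ⟨p, hmem⟩
      rw [hcFun]; dsimp only; rw [dif_pos hex]
      have := hTdisj hex.choose p α hex.choose_spec hmem
      rw [this]
    set d : Ordinal → ℕ → ℕ := fun α n =>
      max (eScale Gfun α n)
        (if (cFun α).1 < α then max (eScale Gfun (cFun α).1 n) (cFun α).2 else 0) with hd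
    refine ⟨d, ?_, ?_⟩
    · -- increasing
      intro α β hαβ hβ
      have h1 : ∀ᶠ n in atTop, eScale Gfun α n ≤ eScale Gfun β n := eScale_mono hαβ hβ
      by_cases hg : (cFun α).1 < α
      · have h2 : ∀ᶠ n in atTop, eScale Gfun (cFun α).1 n ≤ eScale Gfun β n :=
          eScale_mono (hg.trans hαβ) hβ
        filter_upwards [h1, h2, eventually_ge_atTop (cFun α).2] with n hn1 hn2 hn3
        simp only [hd, if_pos hg]
        exact le_trans (max_le hn1 (max_le hn2 (hn3.trans (eScale_ge_id hβ n))))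
          (le_max_left _ _)
      · filter_upwards [h1] with n hn1
        simp only [hd, if_neg hg]
        exact le_trans (max_le hn1 (Nat.zero_le _)) (le_max_left _ _)
    · -- stationarity
      intro f
      obtain ⟨γ, hγ, hfG⟩ := hGdom f
      have h2 : ∀ᶠ n in atTop, f n ≤ eScale Gfun γ n := by
        filter_upwards [hfG, eScale_dominates (le_refl γ) hγ] with n a b
        exact a.trans b
      obtain ⟨N, hN⟩ := eventually_atTop.1 h2
      set k : ℕ := (Finset.range N).sup f with hk
      have hfk : ∀ n, f n ≤ max (eScale Gfun γ n) k := by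
        intro n
        rcases lt_or_ge n N with h | h
        · exact le_trans (Finset.le_sup (Finset.mem_range.2 h)) (le_max_right _ _)
        · exact le_trans (hN n h) (le_max_left _ _)
      intro C hC
      obtain ⟨α, hαT, hαC, hγα, hαω⟩ :
          ∃ α, α ∈ T (⟨γ, hγ⟩, k) ∧ α ∈ C ∧ γ < α ∧ α < omega1 := by
        obtain ⟨α, h1, h2'⟩ := hTstat (⟨γ, hγ⟩, k) _ (club_inter hC (club_Ioi hγ))
        exact ⟨α, h1, h2'.1, h2'.2.1, h2'.2.2⟩
      have hc : cFun α = (γ, k) := hcT (⟨γ, hγ⟩, k) α hαT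
      refine ⟨α, ⟨hαω, ?_⟩, hαC⟩
      intro n
      simp only [hd, hc, if_pos hγα]
      exact le_trans (hfk n) (le_max_right _ _)
  · rintro ⟨d, -, hstat⟩
    have hle : Cardinal.aleph 1 ≤ Cardinal.mk (ℕ → ℕ) := by
      have h1 : Cardinal.mk (ℕ → ℕ) = Cardinal.continuum := by
        rw [← Cardinal.aleph0_power_aleph0, ← Cardinal.mk_nat, Cardinal.power_def]
      rw [h1]
      exact Cardinal.aleph_one_le_continuum
    obtain ⟨S, hS⟩ := Cardinal.le_mk_iff_exists_set.1 hle
    refine ⟨S ∪ (d '' Set.Iio omega1), ?_, ?_⟩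
    · apply le_antisymm
      · refine le_trans (Cardinal.mk_union_le _ _) ?_
        rw [hS]
        refine le_trans (add_le_add le_rfl (mk_image_le_aleph_one d)) ?_
        exact le_of_eq (Cardinal.add_eq_self (Cardinal.aleph0_le_aleph 1))
      · rw [← hS]
        exact Cardinal.mk_le_mk_of_subset Set.subset_union_left
    · intro g
      obtain ⟨α, hmem, -⟩ := hstat g (Set.Iio omega1) club_Iio
      exact ⟨d α, Set.mem_union_right _ ⟨α, hmem.1, rfl⟩, Eventually.of_forall hmem.2⟩

end
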